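/- Weak duality for the TSc model: if (π, Q, P) is TSc-dual-feasible with scalar κ and (v, u, w) is TSc-primal-feasible with goal price τ, then τ·(∑_{i∈I} Q i + ∑_{r∈R} P r) ≤ ∑_{i∈I} v i · X i o − ∑_{r∈R} u r · Y r o + κ·w. -/
import Mathlib


open Finset

/-- A triple `(π, Q, P)` is TSc-dual-feasible with scalar `κ`. -/
def TScDualFeasible {I R J : Type*} [Fintype I] [Fintype R] [Fintype J]
    (X : I → J → ℝ) (Y : R → J → ℝ) (o : J) (κ : ℝ)
    (π : J → ℝ) (Q : I → ℝ) (P : R → ℝ) : Prop :=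
  (∀ j, 0 ≤ π j) ∧ (∀ i, 0 ≤ Q i) ∧ (∀ r, 0 ≤ P r) ∧
  (∀ i, (∑ j, X i j * π j) + Q i * X i o = X i o) ∧
  (∀ r, -(∑ j, Y r j * π j) + P r * Y r o = -(Y r o)) ∧
  (∑ j, π j = κ)

/-- A triple `(v, u, w)` is TSc-primal-feasible with goal price `τ`. -/
def TScPrimalFeasible {I R J : Type*} [Fintype I] [Fintype R] [Fintype J]
    (X : I → J → ℝ) (Y : R → J → ℝ) (o : J) (τ : ℝ)
    (v : I → ℝ) (u : R → ℝ) (w : ℝ) : Prop :=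
  (∀ j, 0 ≤ (∑ i, v i * X i j) - (∑ r, u r * Y r j) + w) ∧
  (∀ i, τ ≤ X i o * v i) ∧ (∀ r, τ ≤ Y r o * u r)

/-- Weak duality for the TSc model. -/
theorem tsc_weak_duality
    {I R J : Type*} [Fintype I] [Fintype R] [Fintype J]
    [Nonempty I] [Nonempty R] [Nonempty J]
    (X : I → J → ℝ) (Y : R → J → ℝ)
    (hX : ∀ i j, 0 < X i j) (hY : ∀ r j, 0 < Y r j)
    (o : J) (τ : ℝ) (hτ : 0 < τ) (κ : ℝ)
    (π : J → ℝ) (Q : I → ℝ) (P : R → ℝ)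
    (hdual : TScDualFeasible X Y o κ π Q P)
    (v : I → ℝ) (u : R → ℝ) (w : ℝ)
    (hprimal : TScPrimalFeasible X Y o τ v u w) :
    τ * ((∑ i, Q i) + ∑ r, P r)
      ≤ (∑ i, v i * X i o) - (∑ r, u r * Y r o) + κ * w := by
  obtain ⟨hπ, hQ, hP, hdi, hdr, hκ⟩ := hdual
  obtain ⟨hp1, hp2, hp3⟩ := hprimal
  -- Step 1: τ * (∑ Q + ∑ P) ≤ ∑ Q i * (X i o * v i) + ∑ P r * (Y r o * u r)
  have step1 : τ * ((∑ i, Q i) + ∑ r, P r)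
      ≤ (∑ i, Q i * (X i o * v i)) + ∑ r, P r * (Y r o * u r) := by
    have h1 : ∀ i ∈ Finset.univ, τ * Q i ≤ Q i * (X i o * v i) := fun i _ => by
      nlinarith [hQ i, hp2 i]
    have h2 : ∀ r ∈ Finset.univ, τ * P r ≤ P r * (Y r o * u r) := fun r _ => by
      nlinarith [hP r, hp3 r]
    calc τ * ((∑ i, Q i) + ∑ r, P r)
        = (∑ i, τ * Q i) + ∑ r, τ * P r := by
          rw [mul_add, Finset.mul_sum, Finset.mul_sum]
      _ ≤ _ := add_le_add (Finset.sum_le_sum h1) (Finset.sum_le_sum h2)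
  -- identities from dual feasibility
  have e1 : ∀ i, Q i * (X i o * v i) = v i * X i o - v i * ∑ j, X i j * π j := by
    intro i
    have h2 : Q i * X i o = X i o - ∑ j, X i j * π j := by linarith [hdi i]
    calc Q i * (X i o * v i) = (Q i * X i o) * v i := by ring
      _ = (X i o - ∑ j, X i j * π j) * v i := by rw [h2]
      _ = v i * X i o - v i * ∑ j, X i j * π j := by ring
  have e2 : ∀ r, P r * (Y r o * u r) = u r * ∑ j, Y r j * π j - u r * Y r o := by
    intro r
    have h2 : P r * Y r o = (∑ j, Y r j * π j) - Y r o := by linarith [hdr r]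
    calc P r * (Y r o * u r) = (P r * Y r o) * u r := by ring
      _ = ((∑ j, Y r j * π j) - Y r o) * u r := by rw [h2]
      _ = u r * ∑ j, Y r j * π j - u r * Y r o := by ring
  have swap1 : ∑ i, v i * ∑ j, X i j * π j = ∑ j, π j * ∑ i, v i * X i j := by
    simp_rw [Finset.mul_sum]
    rw [Finset.sum_comm]
    exact Finset.sum_congr rfl fun j _ => Finset.sum_congr rfl fun i _ => by ring
  have swap2 : ∑ r, u r * ∑ j, Y r j * π j = ∑ j, π j * ∑ r, u r * Y r j := by
    simp_rw [Finset.mul_sum]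
    rw [Finset.sum_comm]
    exact Finset.sum_congr rfl fun j _ => Finset.sum_congr rfl fun r _ => by ring
  have step2 : (∑ i, Q i * (X i o * v i)) + ∑ r, P r * (Y r o * u r)
      = (∑ i, v i * X i o) - (∑ r, u r * Y r o)
        - ∑ j, π j * ((∑ i, v i * X i j) - ∑ r, u r * Y r j) := by
    simp_rw [e1, e2, Finset.sum_sub_distrib, swap1, swap2, mul_sub]
    simp_rw [Finset.sum_sub_distrib]
    ring
  -- Step 3: -∑ π j * S j ≤ κ * w
  have step3 : -(∑ j, π j * ((∑ i, v i * X i j) - ∑ r, u r * Y r j)) ≤ κ * w := by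
    rw [← hκ, Finset.sum_mul, ← Finset.sum_neg_distrib]
    apply Finset.sum_le_sum
    intro j _
    have := hp1 j
    nlinarith [hπ j]
  linarith [step1, step2 ▸ step1]
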